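/- Let A ∈ N be a redundancy-free abstract Swiss cheese with δ₁(A) > 0, set M = μ(A), R = ρ(A), and let S̃ be the set of all B ∈ N(M,R) partially above A. Let B = ((b_n, s_n)) ∈ S̃ and suppose k, ℓ ∈ S_B with k ≠ ℓ satisfy B̄(b_k, s_k) ∩ B̄(b_ℓ, s_ℓ) ≠ ∅. If B(b_k, s_k) ∩ B(b_ℓ, s_ℓ) ≠ ∅, then there exists B' ∈ S̃ with δ₁(B') > δ₁(B); otherwise there exists B' ∈ S̃ with δ₁(B') = δ₁(B) and δ₂(B') < δ₂(B). -/

import Mathlib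

open Metric Set Filter Topology ENNReal

noncomputable section

/-- Abstract Swiss cheese space `F = (ℂ × [0,∞))^{ℕ₀}` with the product topology. -/
abbrev ASC := ℕ → ℂ × NNReal

/-- The centre of the `n`-th disk. -/
def ctr (A : ASC) (n : ℕ) : ℂ := (A n).1

/-- The radius of the `n`-th disk, as a real number. -/
def rad (A : ASC) (n : ℕ) : ℝ := ((A n).2 : ℝ)

/-- The associated Swiss cheese set `X_A`. -/
def Xset (A : ASC) : Set ℂ :=
  closedBall (ctr A 0) (rad A 0) \ ⋃ n : ℕ, ball (ctr A (n + 1)) (rad A (n + 1))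

/-- The significant index set `S_A = {n ≥ 1 : r_n > 0}`. -/
def SIdx (A : ASC) : Set ℕ := {n | 1 ≤ n ∧ 0 < rad A n}

/-- The radius sum function `ρ(A) = ∑_{n≥1} r_n`, valued in `[0,∞]`. -/
def rhoSum (A : ASC) : ℝ≥0∞ := ∑' n : ℕ, ((A (n + 1)).2 : ℝ≥0∞)

/-- The centre bound function `μ(A) = sup_{n≥1} |a_n|`, valued in `[0,∞]`. -/
def muSup (A : ASC) : ℝ≥0∞ := ⨆ n : ℕ, (‖(A (n + 1)).1‖₊ : ℝ≥0∞)

/-- `H_A(E) = {n ∈ S_A : B̄(a_n, r_n) ∩ E ≠ ∅}`. -/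
def HIdx (A : ASC) (E : Set ℂ) : Set ℕ :=
  {n | n ∈ SIdx A ∧ (closedBall (ctr A n) (rad A n) ∩ E).Nonempty}

/-- The local radius sum function `ρ_E(A) = ∑_{n ∈ H_A(E)} r_n`. -/
def rhoLoc (A : ASC) (E : Set ℂ) : ℝ≥0∞ :=
  ∑' n : HIdx A E, ((A (n : ℕ)).2 : ℝ≥0∞)

/-- The discrepancy function of order 1, `δ₁(A) = r_0 − ∑_{n≥1} r_n ∈ [−∞,∞)`. -/
def delta1 (A : ASC) : EReal := (rad A 0 : EReal) - ((rhoSum A : ℝ≥0∞) : EReal)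

/-- The discrepancy function of order `α`, `δ_α(A) = r_0^α − ∑_{n≥1} r_n^α ∈ [−∞,∞)`. -/
def deltaAlpha (α : ℝ) (A : ASC) : EReal :=
  ((((A 0).2 : ℝ≥0∞) ^ α : ℝ≥0∞) : EReal) -
    ((∑' n : ℕ, ((A (n + 1)).2 : ℝ≥0∞) ^ α : ℝ≥0∞) : EReal)

/-- The discrepancy function of order 2. -/
def delta2 (A : ASC) : EReal := deltaAlpha 2 A

/-- `A` is classical. -/
def IsClassicalASC (A : ASC) : Prop :=
  rhoSum A < ⊤ ∧ 0 < rad A 0 ∧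
  ∀ k ∈ SIdx A,
    closedBall (ctr A k) (rad A k) ⊆ ball (ctr A 0) (rad A 0) ∧
    ∀ l ∈ SIdx A, l ≠ k →
      closedBall (ctr A k) (rad A k) ∩ closedBall (ctr A l) (rad A l) = ∅

/-- `A` is semiclassical. -/
def IsSemiclassicalASC (A : ASC) : Prop :=
  rhoSum A < ⊤ ∧ 0 < rad A 0 ∧
  ∀ k ∈ SIdx A,
    ball (ctr A k) (rad A k) ⊆ ball (ctr A 0) (rad A 0) ∧
    ∀ l ∈ SIdx A, l ≠ k →
      ball (ctr A k) (rad A k) ∩ ball (ctr A l) (rad A l) = ∅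

/-- Membership in `N`: finite radius sum and `(r_n)_{n≥1}` non-increasing. -/
def memN (A : ASC) : Prop :=
  rhoSum A < ⊤ ∧ ∀ n : ℕ, 1 ≤ n → (A (n + 1)).2 ≤ (A n).2

/-- Membership in `N(M,R)`. -/
def memNMR (M R : ℝ≥0∞) (A : ASC) : Prop := memN A ∧ muSup A ≤ M ∧ rhoSum A ≤ R

/-- `A` is redundancy-free. -/
def RedundancyFree (A : ASC) : Prop :=
  ∀ k ∈ SIdx A,
    (ball (ctr A k) (rad A k) ∩ closedBall (ctr A 0) (rad A 0)).Nonempty ∧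
    ∀ l ∈ SIdx A, l ≠ k → ¬ ball (ctr A k) (rad A k) ⊆ ball (ctr A l) (rad A l)

/-- `B` is partially above `A`. -/
def PartiallyAbove (B A : ASC) : Prop :=
  closedBall (ctr B 0) (rad B 0) ⊆ closedBall (ctr A 0) (rad A 0) ∧
  ∀ n : ℕ, 1 ≤ n →
    ball (ctr A n) (rad A n) ⊆ (closedBall (ctr B 0) (rad B 0))ᶜ ∨
    ∃ m : ℕ, 1 ≤ m ∧ ball (ctr A n) (rad A n) ⊆ ball (ctr B m) (rad B m)

/-- The set `S̃` of all `B ∈ N(μ(A), ρ(A))` partially above `A`. -/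
def Stilde (A : ASC) : Set ASC :=
  {B | memNMR (muSup A) (rhoSum A) B ∧ PartiallyAbove B A}

/-- `S₁`: the elements of `S̃` on which `δ₁` attains its supremum over `S̃`. -/
def S1 (A : ASC) : Set ASC :=
  {B ∈ Stilde A | delta1 B = sSup (delta1 '' Stilde A)}

/-- `S₂`: the elements of `S₁` on which `δ₂` attains its infimum over `S₁`. -/
def S2 (A : ASC) : Set ASC :=
  {B ∈ S1 A | delta2 B = sInf (delta2 '' S1 A)}

/-- The (classical) error set `E(A)`. -/
def errSet (A : ASC) : Set ℂ :=
  (⋃ m ∈ SIdx A, ⋃ n ∈ SIdx A, ⋃ (_ : m ≠ n),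
    closedBall (ctr A m) (rad A m) ∩ closedBall (ctr A n) (rad A n)) ∪
  ⋃ n ∈ SIdx A, (ball (ctr A 0) (rad A 0))ᶜ ∩ closedBall (ctr A n) (rad A n)

/-- `V(C) = ⋃_{n∈I} U_n`. -/
def VC (I : Set ℕ) (U : ℕ → Set ℂ) : Set ℂ := ⋃ n ∈ I, U n

/-- `F(C) = ⋃_{n∈I} K_n`. -/
def FC (I : Set ℕ) (K : ℕ → Set ℂ) : Set ℂ := ⋃ n ∈ I, K n

/-- The set `L_A(C)` for a controlling collection `C = ((K_n, U_n))_{n∈I}`. -/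
def LSet (A : ASC) (I : Set ℕ) (K U : ℕ → Set ℂ) : Set ASC :=
  {B | memNMR (muSup A) (rhoSum A) B ∧
    (∀ n ∈ I, rhoLoc B (U n) ≤ rhoLoc A (U n)) ∧
    closedBall (ctr B 0) (rad B 0) = closedBall (ctr A 0) (rad A 0) ∧
    (∀ k ∈ SIdx A, closedBall (ctr A k) (rad A k) ∩ VC I U = ∅ →
      ∃ l ∈ SIdx B, ball (ctr B l) (rad B l) = ball (ctr A k) (rad A k)) ∧
    (∀ n ∈ I, ∀ k ∈ SIdx A, (closedBall (ctr A k) (rad A k) ∩ U n).Nonempty →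
      (∃ l ∈ SIdx B, ball (ctr B l) (rad B l) = ball (ctr A k) (rad A k)) ∨
      (∃ l ∈ HIdx B (K n), ball (ctr A k) (rad A k) ⊆ ball (ctr B l) (rad B l)))}

/-- `A` is annular: `a_0 = a_1` and `0 < r_1 < r_0`. -/
def Annular (A : ASC) : Prop := ctr A 0 = ctr A 1 ∧ 0 < rad A 1 ∧ rad A 1 < rad A 0

/-- The annular radius sum `ρ_a(A) = ∑_{n≥2} r_n`. -/
def rhoAnn (A : ASC) : ℝ≥0∞ := ∑' n : ℕ, ((A (n + 2)).2 : ℝ≥0∞)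

/-- The annular discrepancy `δ_a(A) = r_0 − r_1 − 2ρ_a(A)`. -/
def deltaAnn (A : ASC) : EReal :=
  ((rad A 0 - rad A 1 : ℝ) : EReal) - ((2 * rhoAnn A : ℝ≥0∞) : EReal)

/-- The family `Ã` of Lemma 6.4 / Theorem 6.6 (annular classicalisation). -/
def ATilde (A : ASC) : Set ASC :=
  {B | (∀ n : ℕ, 2 ≤ n → (B (n + 1)).2 ≤ (B n).2) ∧
    rhoAnn B ≤ rhoAnn A ∧ muSup B ≤ muSup A ∧ PartiallyAbove B A ∧
    ctr B 0 = ctr A 0 ∧ ctr B 1 = ctr A 0 ∧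
    rad A 1 ≤ rad B 1 ∧ rad B 1 ≤ rad B 0 ∧ rad B 0 ≤ rad A 0}



/-! ### Auxiliary lemmas for Lemma 4.7(a) -/

private lemma tail_mono (B : ASC) (hmono : ∀ n, 1 ≤ n → (B (n + 1)).2 ≤ (B n).2) :
    ∀ a b : ℕ, 1 ≤ a → a ≤ b → (B b).2 ≤ (B a).2 := by
  intro a b ha hab
  induction b with
  | zero => exact absurd hab (by omega)
  | succ n ih =>
    rcases Nat.eq_or_lt_of_le hab with h | h
    · rw [← h]
    · exact le_trans (hmono n (by omega)) (ih (by omega))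

private lemma le_muSup (B : ASC) (m : ℕ) (hm : 1 ≤ m) :
    (‖(B m).1‖₊ : ℝ≥0∞) ≤ muSup B := by
  simp only [muSup]
  have h : m - 1 + 1 = m := by omega
  have h2 := le_iSup (fun n => (‖(B (n + 1)).1‖₊ : ℝ≥0∞)) (m - 1)
  simpa only [h] using h2

private lemma ereal_coe_toReal (a : ℝ≥0∞) (ha : a ≠ ⊤) :
    ((a.toReal : ℝ) : EReal) = (a : EReal) := by
  rw [← EReal.toReal_coe_ennreal]
  exact EReal.coe_toReal (by simpa [EReal.coe_ennreal_eq_top_iff] using ha)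
    (EReal.coe_ennreal_ne_bot a)

private lemma delta1_eq (C : ASC) (h : rhoSum C ≠ ⊤) :
    delta1 C = ((rad C 0 - (rhoSum C).toReal : ℝ) : EReal) := by
  simp only [delta1]
  rw [EReal.coe_sub, ereal_coe_toReal _ h]

private lemma delta2_eq (C : ASC) (h : (∑' n, ((C (n + 1)).2 : ℝ≥0∞) ^ (2 : ℝ)) ≠ ⊤) :
    delta2 C = (((((C 0).2 : ℝ≥0∞) ^ (2 : ℝ)).toReal
      - (∑' n, ((C (n + 1)).2 : ℝ≥0∞) ^ (2 : ℝ)).toReal : ℝ) : EReal) := by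
  simp only [delta2, deltaAlpha]
  rw [EReal.coe_sub, ereal_coe_toReal _ h,
    ereal_coe_toReal _ (ENNReal.rpow_ne_top_of_nonneg (by norm_num) ENNReal.coe_ne_top)]

private lemma merge_aux (B : ASC) (hmono : ∀ n, 1 ≤ n → (B (n + 1)).2 ≤ (B n).2)
    (k l : ℕ) (hk1 : 1 ≤ k) (hkl : k < l) (c : ℂ) (snew : NNReal)
    (hks : (B k).2 ≤ snew)
    (hbk : ball (ctr B k) (rad B k) ⊆ ball c (snew : ℝ))
    (hbl : ball (ctr B l) (rad B l) ⊆ ball c (snew : ℝ))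
    (hcn : (‖c‖₊ : ℝ≥0∞) ≤ muSup B) :
    ∃ B' : ASC, B' 0 = B 0 ∧ (∀ n, 1 ≤ n → (B' (n + 1)).2 ≤ (B' n).2) ∧
      muSup B' ≤ muSup B ∧
      (∀ m, 1 ≤ m → ∃ m', 1 ≤ m' ∧
        ball (ctr B m) (rad B m) ⊆ ball (ctr B' m') (rad B' m')) ∧
      ∀ g : ℂ × NNReal → ℝ≥0∞,
        (∑' n, g (B' (n + 1))) + g (B k) + g (B l)
          = (∑' n, g (B (n + 1))) + g (c, snew) := by
  classical
  have mono := tail_mono B hmono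
  have hex : ∃ i, 1 ≤ i ∧ (B i).2 ≤ snew := ⟨k, hk1, hks⟩
  set j := Nat.find hex with hjdef
  obtain ⟨hj1, hjs⟩ := Nat.find_spec hex
  have hjk : j ≤ k := Nat.find_le ⟨hk1, hks⟩
  have hjlt : ∀ i, 1 ≤ i → i < j → snew < (B i).2 := by
    intro i h1 h2
    by_contra h
    exact Nat.find_min hex h2 ⟨h1, le_of_not_gt h⟩
  have hub : ∀ m, j ≤ m → (B m).2 ≤ snew := fun m hm => (mono j m hj1 hm).trans hjs
  set B' : ASC := fun n => if n < j then B n else if n = j then (c, snew)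
      else if n ≤ k then B (n - 1) else if n < l then B n else B (n + 1) with hB'def
  have hvlt : ∀ n, n < j → B' n = B n := by
    intro n h; simp only [hB'def]; rw [if_pos h]
  have hv0 : B' 0 = B 0 := hvlt 0 (by omega)
  have hvj : B' j = (c, snew) := by
    simp only [hB'def]; simp
  have hvmid : ∀ n, j < n → n ≤ k → B' n = B (n - 1) := by
    intro n h1 h2; simp only [hB'def]
    rw [if_neg (by omega), if_neg (by omega), if_pos h2]
  have hvkl : ∀ n, k < n → n < l → B' n = B n := by
    intro n h1 h2; simp only [hB'def]
    rw [if_neg (by omega), if_neg (by omega), if_neg (by omega), if_pos h2]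
  have hvge : ∀ n, l ≤ n → B' n = B (n + 1) := by
    intro n h; simp only [hB'def]
    rw [if_neg (by omega), if_neg (by omega), if_neg (by omega), if_neg (by omega)]
  have hmono' : ∀ n, 1 ≤ n → (B' (n + 1)).2 ≤ (B' n).2 := by
    intro n hn
    simp only [hB'def]
    split_ifs <;>
      first
        | (exfalso; omega)
        | (exact (hjlt n hn (by omega)).le)
        | (exact hub _ (by omega))
        | (apply mono <;> omega)
  have hmuB' : muSup B' ≤ muSup B := by
    have hrw : muSup B' = ⨆ n, (‖(B' (n + 1)).1‖₊ : ℝ≥0∞) := rfl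
    rw [hrw]
    refine iSup_le fun n => ?_
    simp only [hB'def]
    split_ifs <;>
      first
        | (exact hcn)
        | (exact le_muSup B _ (by omega))
  have key : ∀ m, 1 ≤ m → m ≠ k → m ≠ l → ∃ m', 1 ≤ m' ∧ B' m' = B m := by
    intro m h1 hmk hml
    rcases lt_or_ge m j with h | h
    · exact ⟨m, h1, hvlt m h⟩
    rcases lt_or_ge m k with h2 | h2
    · refine ⟨m + 1, by omega, ?_⟩
      rw [hvmid (m + 1) (by omega) (by omega)]
      congr 1
    rcases lt_or_ge m l with h3 | h3
    · exact ⟨m, h1, hvkl m (by omega) h3⟩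
    · refine ⟨m - 1, by omega, ?_⟩
      rw [hvge (m - 1) (by omega)]
      congr 1
      omega
  have hcover : ∀ m, 1 ≤ m → ∃ m', 1 ≤ m' ∧
      ball (ctr B m) (rad B m) ⊆ ball (ctr B' m') (rad B' m') := by
    intro m hm
    by_cases hmk : m = k
    · subst hmk
      refine ⟨j, hj1, ?_⟩
      have h1 : ctr B' j = c := by simp only [ctr, hvj]
      have h2 : rad B' j = (snew : ℝ) := by simp only [rad, hvj]
      rw [h1, h2]; exact hbk
    by_cases hml : m = l
    · subst hml
      refine ⟨j, hj1, ?_⟩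
      have h1 : ctr B' j = c := by simp only [ctr, hvj]
      have h2 : rad B' j = (snew : ℝ) := by simp only [rad, hvj]
      rw [h1, h2]; exact hbl
    · obtain ⟨m', h1, h2⟩ := key m hm hmk hml
      refine ⟨m', h1, ?_⟩
      simp only [ctr, rad, h2]
      exact Subset.rfl
  have hgid : ∀ g : ℂ × NNReal → ℝ≥0∞,
      (∑' n, g (B' (n + 1))) + g (B k) + g (B l)
        = (∑' n, g (B (n + 1))) + g (c, snew) := by
    intro g
    have hJK : j - 1 ≤ k - 1 := by omega
    have hKL : k - 1 < l - 1 := by omega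
    set J := j - 1 with hJ
    set K := k - 1 with hK
    set L := l - 1 with hL
    set G : ℕ → ℝ≥0∞ := fun n => g (B (n + 1)) with hGdef
    set G' : ℕ → ℝ≥0∞ := fun n => g (B' (n + 1)) with hG'def
    have hG'1 : ∀ n, n < J → G' n = G n := by
      intro n h
      simp only [hG'def, hGdef]
      rw [hvlt (n + 1) (by omega)]
    have hG'2 : ∀ n, J < n → n ≤ K → G' n = G (n - 1) := by
      intro n h1 h2
      simp only [hG'def, hGdef]
      rw [hvmid (n + 1) (by omega) (by omega), show n + 1 - 1 = n - 1 + 1 by omega]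
    have hG'3 : ∀ n, K < n → n < L → G' n = G n := by
      intro n h1 h2
      simp only [hG'def, hGdef]
      rw [hvkl (n + 1) (by omega) (by omega)]
    have hG'4 : ∀ n, L ≤ n → G' n = G (n + 1) := by
      intro n h
      simp only [hG'def, hGdef]
      rw [hvge (n + 1) (by omega)]
    have hG'J : G' J = g (c, snew) := by
      simp only [hG'def]
      rw [show J + 1 = j by omega, hvj]
    have hGK : G K = g (B k) := by
      simp only [hGdef]
      rw [show K + 1 = k by omega]
    have hGL : G L = g (B l) := by
      simp only [hGdef]
      rw [show L + 1 = l by omega]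
    set iota : ℕ → ℕ := fun n =>
      if n < J then n else if n = J then K else if n ≤ K then n - 1
      else if n < L then n else n + 1 with hiodef
    have hio1 : ∀ n, n < J → iota n = n := by
      intro n h; simp only [hiodef]; rw [if_pos h]
    have hio2 : ∀ n, J < n → n ≤ K → iota n = n - 1 := by
      intro n h1 h2; simp only [hiodef]
      rw [if_neg (by omega), if_neg (by omega), if_pos h2]
    have hio3 : ∀ n, K < n → n < L → iota n = n := by
      intro n h1 h2; simp only [hiodef]
      rw [if_neg (by omega), if_neg (by omega), if_neg (by omega), if_pos h2]
    have hio4 : ∀ n, L ≤ n → iota n = n + 1 := by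
      intro n h; simp only [hiodef]
      rw [if_neg (by omega), if_neg (by omega), if_neg (by omega), if_neg (by omega)]
    set F : ℕ → ℝ≥0∞ := fun n => if n = J then 0 else G' n with hFdef
    set F2 : ℕ → ℝ≥0∞ := fun n => if n = L then 0 else if n = K then 0 else G n with hF2def
    have hFJ : F J = 0 := by simp [hFdef]
    have hF2L : F2 L = 0 := by simp [hF2def]
    have hF2K : F2 K = 0 := by simp [hF2def]
    have hFval : ∀ n, n ≠ J → F n = G' n := by
      intro n h; simp only [hFdef]; rw [if_neg h]
    have hF2val : ∀ n, n ≠ L → n ≠ K → F2 n = G n := by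
      intro n h1 h2; simp only [hF2def]; rw [if_neg h1, if_neg h2]
    have hkey : ∀ n, n ≠ J → F2 (iota n) = F n := by
      intro n hnJ
      rcases lt_or_ge n J with h1 | h1
      · rw [hio1 n h1, hF2val n (by omega) (by omega), hFval n hnJ, hG'1 n h1]
      rcases le_or_gt n K with h2 | h2
      · have h1' : J < n := by omega
        rw [hio2 n h1' h2, hF2val (n - 1) (by omega) (by omega), hFval n hnJ,
          hG'2 n h1' h2]
      rcases lt_or_ge n L with h3 | h3
      · rw [hio3 n h2 h3, hF2val n (by omega) (by omega), hFval n hnJ, hG'3 n h2 h3]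
      · rw [hio4 n h3, hF2val (n + 1) (by omega) (by omega), hFval n hnJ, hG'4 n h3]
    have hinj : ∀ x y : ℕ, iota x = iota y → x = y := by
      intro x y h
      simp only [hiodef] at h
      split_ifs at h <;> omega
    have e3 : ∑' n, F2 n = ∑' n, F n := by
      apply tsum_eq_tsum_of_ne_zero_bij (i := fun x => iota x.1)
      · exact fun x y hxy => Subtype.ext (hinj _ _ hxy)
      · intro n hn
        have hn' : F2 n ≠ 0 := hn
        have hnL : n ≠ L := by rintro rfl; exact hn' hF2L
        have hnK : n ≠ K := by rintro rfl; exact hn' hF2K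
        have hmem : ∀ m, m ≠ J → iota m = n →
            n ∈ Set.range (fun x : Function.support F => iota x.1) := by
          intro m hmJ him
          have hsupp : F m ≠ 0 := by rw [← hkey m hmJ, him]; exact hn'
          exact ⟨⟨m, hsupp⟩, him⟩
        rcases lt_or_ge n J with h1 | h1
        · exact hmem n (by omega) (hio1 n h1)
        rcases lt_or_ge n K with h2 | h2
        · refine hmem (n + 1) (by omega) ?_
          rw [hio2 (n + 1) (by omega) (by omega)]
          omega
        rcases lt_or_ge n L with h3 | h3
        · exact hmem n (by omega) (hio3 n (by omega) h3)
        · refine hmem (n - 1) (by omega) ?_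
          rw [hio4 (n - 1) (by omega)]
          omega
      · rintro ⟨x, hx⟩
        have hxJ : x ≠ J := by rintro rfl; exact hx hFJ
        exact hkey x hxJ
    have e1 : ∑' n, G' n = g (c, snew) + ∑' n, F n := by
      have ha : ∑' n, G' n = G' J + ∑' n, (if n = J then 0 else G' n) :=
        ENNReal.summable.tsum_eq_add_tsum_ite' J
      rw [ha, hG'J]
    have e2 : ∑' n, G n = G K + (G L + ∑' n, F2 n) := by
      have ha : ∑' n, G n = G K + ∑' n, (if n = K then 0 else G n) :=
        ENNReal.summable.tsum_eq_add_tsum_ite' K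
      have hb : ∑' n, (if n = K then 0 else G n)
          = (if L = K then 0 else G L)
            + ∑' n, (if n = L then 0 else if n = K then 0 else G n) :=
        ENNReal.summable.tsum_eq_add_tsum_ite' L
      rw [ha, hb, if_neg (show ¬ L = K by omega)]
    rw [e1, e2, ← e3, hGK, hGL]
    ring
  exact ⟨B', hv0, hmono', hmuB', hcover, hgid⟩

private lemma merge_core (A : ASC) (B : ASC) (hB : B ∈ Stilde A)
    (k l : ℕ) (hk : k ∈ SIdx B) (hl : l ∈ SIdx B) (hkl : k < l)
    (hmeet : (closedBall (ctr B k) (rad B k) ∩ closedBall (ctr B l) (rad B l)).Nonempty) :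
    ((ball (ctr B k) (rad B k) ∩ ball (ctr B l) (rad B l)).Nonempty →
      ∃ B' ∈ Stilde A, delta1 B < delta1 B') ∧
    (ball (ctr B k) (rad B k) ∩ ball (ctr B l) (rad B l) = ∅ →
      ∃ B' ∈ Stilde A, delta1 B' = delta1 B ∧ delta2 B' < delta2 B) := by
  have hBmem := hB
  simp only [Stilde, Set.mem_setOf_eq, memNMR, memN] at hBmem
  obtain ⟨⟨⟨hBfin, hBmono⟩, hBmu, hBrho⟩, hBpa⟩ := hBmem
  simp only [PartiallyAbove] at hBpa
  obtain ⟨hBpa1, hBpa2⟩ := hBpa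
  have hk' : 1 ≤ k ∧ 0 < rad B k := hk
  have hl' : 1 ≤ l ∧ 0 < rad B l := hl
  set bk := ctr B k with hbkdef
  set bl := ctr B l with hbldef
  set skr := rad B k with hskrdef
  set slr := rad B l with hslrdef
  have hskr : 0 < skr := hk'.2
  have hslr : 0 < slr := hl'.2
  set d := dist bk bl with hddef
  have hd0 : 0 ≤ d := dist_nonneg
  have hd : d ≤ skr + slr := by
    obtain ⟨x, hx1, hx2⟩ := hmeet
    rw [mem_closedBall] at hx1 hx2
    have h1 := dist_triangle bk x bl
    have h2 : dist bk x = dist x bk := dist_comm _ _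
    have h3 : dist x bl = dist x bl := rfl
    rw [hddef]
    linarith
  set snr := max (max skr slr) ((d + skr + slr) / 2) with hsnrdef
  have hsk_snr : skr ≤ snr := le_trans (le_max_left _ _) (le_max_left _ _)
  have hsl_snr : slr ≤ snr := le_trans (le_max_right _ _) (le_max_left _ _)
  have hsnr0 : 0 ≤ snr := le_trans hskr.le hsk_snr
  have h2snr : d + skr + slr ≤ 2 * snr := by
    have h := le_max_right (max skr slr) ((d + skr + slr) / 2)
    have h2 : (d + skr + slr) / 2 ≤ snr := h
    linarith
  have hsnr_le : snr ≤ skr + slr :=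
    max_le (max_le (by linarith) (by linarith)) (by linarith)
  set snew := Real.toNNReal snr with hsnewdef
  have hsnewco : (snew : ℝ) = snr := Real.coe_toNNReal _ hsnr0
  set u := min d (snr - skr) with hudef
  have hu0 : 0 ≤ u := le_min hd0 (by linarith)
  have hud : u ≤ d := min_le_left _ _
  have husk : u ≤ snr - skr := min_le_right _ _
  have hul : d - u ≤ snr - slr := by
    have h1 : d - (snr - slr) ≤ u := le_min (by linarith) (by linarith)
    linarith
  set t := u / d with htdef
  have ht0 : 0 ≤ t := div_nonneg hu0 hd0
  have ht1 : t ≤ 1 := div_le_one_of_le₀ hud hd0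
  set c := bk + t • (bl - bk) with hcdef
  have hnormd : ‖bl - bk‖ = d := by rw [hddef, dist_eq_norm, norm_sub_rev]
  have hnormd' : ‖bk - bl‖ = d := by rw [hddef, dist_eq_norm]
  have hck : dist c bk ≤ snr - skr := by
    have h1 : c - bk = t • (bl - bk) := by rw [hcdef]; module
    rw [dist_eq_norm, h1, norm_smul, Real.norm_eq_abs, abs_of_nonneg ht0, hnormd]
    rcases eq_or_lt_of_le hd0 with h | h
    · rw [← h, mul_zero]; linarith
    · have h3 : t * d = u := div_mul_cancel₀ u (ne_of_gt h)
      rw [htdef] at h3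
      rw [htdef, h3]
      linarith
  have hcl : dist c bl ≤ snr - slr := by
    have h1 : c - bl = (1 - t) • (bk - bl) := by rw [hcdef]; module
    rw [dist_eq_norm, h1, norm_smul, Real.norm_eq_abs, abs_of_nonneg (by linarith), hnormd']
    rcases eq_or_lt_of_le hd0 with h | h
    · rw [← h, mul_zero]; linarith
    · have h3 : t * d = u := div_mul_cancel₀ u (ne_of_gt h)
      have h4 : (1 - t) * d = d - u := by rw [sub_mul, one_mul, h3]
      rw [h4]
      linarith
  have hbsubk : ball bk skr ⊆ ball c (snew : ℝ) := by
    intro x hx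
    rw [mem_ball] at hx ⊢
    have h1 := dist_triangle x bk c
    have h2 : dist bk c = dist c bk := dist_comm _ _
    rw [hsnewco]
    linarith
  have hbsubl : ball bl slr ⊆ ball c (snew : ℝ) := by
    intro x hx
    rw [mem_ball] at hx ⊢
    have h1 := dist_triangle x bl c
    have h2 : dist bl c = dist c bl := dist_comm _ _
    rw [hsnewco]
    linarith
  have hksnn : (B k).2 ≤ snew := by
    rw [← NNReal.coe_le_coe, hsnewco]
    exact hsk_snr
  have hcnorm : (‖c‖₊ : ℝ≥0∞) ≤ muSup B := by
    have hnormc : ‖c‖ ≤ max ‖bk‖ ‖bl‖ := by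
      have h1 : c = (1 - t) • bk + t • bl := by rw [hcdef]; module
      rw [h1]
      have h2 : ‖(1 - t) • bk + t • bl‖ ≤ ‖(1 - t) • bk‖ + ‖t • bl‖ := norm_add_le _ _
      have h3 : ‖(1 - t) • bk‖ = (1 - t) * ‖bk‖ := by
        rw [norm_smul, Real.norm_eq_abs, abs_of_nonneg (by linarith)]
      have h4 : ‖t • bl‖ = t * ‖bl‖ := by
        rw [norm_smul, Real.norm_eq_abs, abs_of_nonneg ht0]
      have h5 : (1 - t) * ‖bk‖ ≤ (1 - t) * max ‖bk‖ ‖bl‖ :=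
        mul_le_mul_of_nonneg_left (le_max_left _ _) (by linarith)
      have h6 : t * ‖bl‖ ≤ t * max ‖bk‖ ‖bl‖ :=
        mul_le_mul_of_nonneg_left (le_max_right _ _) ht0
      have h7 : (1 - t) * max ‖bk‖ ‖bl‖ + t * max ‖bk‖ ‖bl‖ = max ‖bk‖ ‖bl‖ := by ring
      linarith
    rcases le_total ‖bk‖ ‖bl‖ with h | h
    · have h1 : ‖c‖ ≤ ‖bl‖ := by rw [max_eq_right h] at hnormc; exact hnormc
      have h2 : ‖c‖₊ ≤ ‖(B l).1‖₊ := by rw [← NNReal.coe_le_coe, coe_nnnorm, coe_nnnorm]; exact h1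
      exact le_trans (ENNReal.coe_le_coe.mpr h2) (le_muSup B l (by omega))
    · have h1 : ‖c‖ ≤ ‖bk‖ := by rw [max_eq_left h] at hnormc; exact hnormc
      have h2 : ‖c‖₊ ≤ ‖(B k).1‖₊ := by rw [← NNReal.coe_le_coe, coe_nnnorm, coe_nnnorm]; exact h1
      exact le_trans (ENNReal.coe_le_coe.mpr h2) (le_muSup B k (by omega))
  obtain ⟨B', hB'0, hB'mono, hB'mu, hB'cov, hB'g⟩ :=
    merge_aux B hBmono k l hk'.1 hkl c snew hksnn hbsubk hbsubl hcnorm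
  have hc0 : ctr B' 0 = ctr B 0 := by simp only [ctr, hB'0]
  have hr0 : rad B' 0 = rad B 0 := by simp only [rad, hB'0]
  have hrho : rhoSum B' + ((B k).2 : ℝ≥0∞) + ((B l).2 : ℝ≥0∞)
      = rhoSum B + (snew : ℝ≥0∞) := hB'g (fun p => ((p.2 : ℝ≥0∞)))
  have hSne : ((B k).2 : ℝ≥0∞) + ((B l).2 : ℝ≥0∞) ≠ ⊤ :=
    ENNReal.add_ne_top.mpr ⟨ENNReal.coe_ne_top, ENNReal.coe_ne_top⟩
  have hsnle : (snew : ℝ≥0∞) ≤ ((B k).2 : ℝ≥0∞) + ((B l).2 : ℝ≥0∞) := by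
    rw [← ENNReal.coe_add]
    apply ENNReal.coe_le_coe.mpr
    rw [← NNReal.coe_le_coe]
    push_cast
    rw [hsnewco]
    exact hsnr_le
  have hBfin' : rhoSum B ≠ ⊤ := hBfin.ne
  have hrhoB'_le : rhoSum B' ≤ rhoSum B := by
    have h1 : rhoSum B' + (((B k).2 : ℝ≥0∞) + ((B l).2 : ℝ≥0∞))
        ≤ rhoSum B + (((B k).2 : ℝ≥0∞) + ((B l).2 : ℝ≥0∞)) := by
      rw [← add_assoc, hrho]
      exact add_le_add_right hsnle _
    exact (ENNReal.add_le_add_iff_right hSne).mp h1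
  have hB'fin : rhoSum B' ≠ ⊤ := (lt_of_le_of_lt hrhoB'_le hBfin).ne
  have hB'St : B' ∈ Stilde A := by
    simp only [Stilde, Set.mem_setOf_eq, memNMR, memN, PartiallyAbove]
    refine ⟨⟨⟨lt_of_le_of_lt hrhoB'_le hBfin, hB'mono⟩, le_trans hB'mu hBmu,
      le_trans hrhoB'_le hBrho⟩, ?_, ?_⟩
    · rw [hc0, hr0]; exact hBpa1
    · intro n hn
      rcases hBpa2 n hn with h | ⟨m, hm1, hsub⟩
      · left; rw [hc0, hr0]; exact h
      · right
        obtain ⟨m', h1, h2⟩ := hB'cov m hm1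
        exact ⟨m', h1, hsub.trans h2⟩
  constructor
  · -- open balls intersect
    intro hopen
    obtain ⟨z, hz1, hz2⟩ := hopen
    rw [mem_ball] at hz1 hz2
    have hdl : d < skr + slr := by
      have h1 := dist_triangle bk z bl
      have h2 : dist bk z = dist z bk := dist_comm _ _
      rw [hddef]
      linarith
    have hsnrlt : snr < skr + slr :=
      max_lt (max_lt (by linarith) (by linarith)) (by linarith)
    have hsnlt : (snew : ℝ≥0∞) < ((B k).2 : ℝ≥0∞) + ((B l).2 : ℝ≥0∞) := by
      rw [← ENNReal.coe_add]
      apply ENNReal.coe_lt_coe.mpr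
      rw [← NNReal.coe_lt_coe]
      push_cast
      rw [hsnewco]
      exact hsnrlt
    have hlt : rhoSum B' < rhoSum B := by
      have h1 : rhoSum B' + (((B k).2 : ℝ≥0∞) + ((B l).2 : ℝ≥0∞))
          < rhoSum B + (((B k).2 : ℝ≥0∞) + ((B l).2 : ℝ≥0∞)) := by
        rw [← add_assoc, hrho]
        exact ENNReal.add_lt_add_left hBfin' hsnlt
      exact (ENNReal.add_lt_add_iff_right hSne).mp h1
    refine ⟨B', hB'St, ?_⟩
    rw [delta1_eq B hBfin', delta1_eq B' hB'fin, hr0, EReal.coe_lt_coe_iff]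
    have h2 := (ENNReal.toReal_lt_toReal hB'fin hBfin').mpr hlt
    linarith
  · -- tangent case
    intro hempty
    have hdge : skr + slr ≤ d := by
      by_contra hcon
      push_neg at hcon
      have hssum : 0 < skr + slr := by linarith
      set a := skr / (skr + slr) with hadef
      have ha0 : 0 < a := div_pos hskr hssum
      have ha1 : a < 1 := by rw [hadef, div_lt_one hssum]; linarith
      set z := bk + a • (bl - bk) with hzdef
      have hzk : dist z bk < skr := by
        have h1 : z - bk = a • (bl - bk) := by rw [hzdef]; module
        rw [dist_eq_norm, h1, norm_smul, Real.norm_eq_abs, abs_of_nonneg ha0.le, hnormd]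
        have h2 : a * d < a * (skr + slr) := mul_lt_mul_of_pos_left hcon ha0
        have h3 : a * (skr + slr) = skr := by
          rw [hadef, div_mul_cancel₀ _ (ne_of_gt hssum)]
        linarith
      have hzl : dist z bl < slr := by
        have h1 : z - bl = (1 - a) • (bk - bl) := by rw [hzdef]; module
        rw [dist_eq_norm, h1, norm_smul, Real.norm_eq_abs, abs_of_nonneg (by linarith),
          hnormd']
        have h2 : (1 - a) * d < (1 - a) * (skr + slr) :=
          mul_lt_mul_of_pos_left hcon (by linarith)
        have h3 : (1 - a) * (skr + slr) = slr := by
          rw [hadef, sub_mul, one_mul, div_mul_cancel₀ _ (ne_of_gt hssum)]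
          ring
        linarith
      have hzin : z ∈ ball bk skr ∩ ball bl slr := ⟨mem_ball.mpr hzk, mem_ball.mpr hzl⟩
      rw [hempty] at hzin
      exact hzin
    have hdeq : d = skr + slr := le_antisymm hd hdge
    have hsnreq : snr = skr + slr := by
      have h1 : (d + skr + slr) / 2 = skr + slr := by rw [hdeq]; ring
      rw [hsnrdef, h1]
      exact max_eq_right (max_le (by linarith) (by linarith))
    have hsneqnn : snew = (B k).2 + (B l).2 := by
      apply NNReal.coe_injective
      push_cast
      rw [hsnewco, hsnreq]
      rw [hskrdef, hslrdef]
      simp only [rad]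
    have hsneq : (snew : ℝ≥0∞) = ((B k).2 : ℝ≥0∞) + ((B l).2 : ℝ≥0∞) := by
      rw [hsneqnn, ENNReal.coe_add]
    have hrhoeq : rhoSum B' = rhoSum B := by
      have h1 : rhoSum B' + (((B k).2 : ℝ≥0∞) + ((B l).2 : ℝ≥0∞))
          = rhoSum B + (((B k).2 : ℝ≥0∞) + ((B l).2 : ℝ≥0∞)) := by
        rw [← add_assoc, hrho, hsneq]
      exact (ENNReal.add_left_inj hSne).mp h1
    have hsq : (∑' n, ((B' (n + 1)).2 : ℝ≥0∞) ^ (2 : ℝ))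
        + ((B k).2 : ℝ≥0∞) ^ (2 : ℝ) + ((B l).2 : ℝ≥0∞) ^ (2 : ℝ)
        = (∑' n, ((B (n + 1)).2 : ℝ≥0∞) ^ (2 : ℝ)) + ((snew : ℝ≥0∞)) ^ (2 : ℝ) :=
      hB'g (fun p => ((p.2 : ℝ≥0∞)) ^ (2 : ℝ))
    have hpow2 : ∀ x : ℝ≥0∞, x ^ (2 : ℝ) = x * x := by
      intro x
      rw [show (2 : ℝ) = ((2 : ℕ) : ℝ) by norm_num, ENNReal.rpow_natCast, sq]
    have hQfin : (∑' n, ((B (n + 1)).2 : ℝ≥0∞) ^ (2 : ℝ)) ≠ ⊤ := by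
      have hle : (∑' n, ((B (n + 1)).2 : ℝ≥0∞) ^ (2 : ℝ))
          ≤ ((B 1).2 : ℝ≥0∞) * rhoSum B := by
        simp only [rhoSum]
        rw [← ENNReal.tsum_mul_left]
        refine ENNReal.tsum_le_tsum fun n => ?_
        rw [hpow2]
        exact mul_le_mul'
          (ENNReal.coe_le_coe.mpr (tail_mono B hBmono 1 (n + 1) le_rfl (by omega))) le_rfl
      exact ((lt_of_le_of_lt hle (ENNReal.mul_lt_top ENNReal.coe_lt_top hBfin))).ne
    have hprodne : 2 * (((B k).2 : ℝ≥0∞) * ((B l).2 : ℝ≥0∞)) ≠ ⊤ := by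
      apply ENNReal.mul_ne_top
      · exact ENNReal.ofNat_ne_top
      · exact ENNReal.mul_ne_top ENNReal.coe_ne_top ENNReal.coe_ne_top
    have hsq2 : (∑' n, ((B' (n + 1)).2 : ℝ≥0∞) ^ (2 : ℝ))
        = (∑' n, ((B (n + 1)).2 : ℝ≥0∞) ^ (2 : ℝ))
          + 2 * (((B k).2 : ℝ≥0∞) * ((B l).2 : ℝ≥0∞)) := by
      have h := hsq
      rw [hsneq] at h
      simp only [hpow2] at h
      have hs2ne : ((B k).2 : ℝ≥0∞) * ((B k).2 : ℝ≥0∞)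
          + ((B l).2 : ℝ≥0∞) * ((B l).2 : ℝ≥0∞) ≠ ⊤ :=
        ENNReal.add_ne_top.mpr ⟨ENNReal.mul_ne_top ENNReal.coe_ne_top ENNReal.coe_ne_top,
          ENNReal.mul_ne_top ENNReal.coe_ne_top ENNReal.coe_ne_top⟩
      have h2 : (∑' n, ((B' (n + 1)).2 : ℝ≥0∞) * ((B' (n + 1)).2 : ℝ≥0∞))
          + (((B k).2 : ℝ≥0∞) * ((B k).2 : ℝ≥0∞)
            + ((B l).2 : ℝ≥0∞) * ((B l).2 : ℝ≥0∞))
          = ((∑' n, ((B (n + 1)).2 : ℝ≥0∞) * ((B (n + 1)).2 : ℝ≥0∞))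
            + 2 * (((B k).2 : ℝ≥0∞) * ((B l).2 : ℝ≥0∞)))
          + (((B k).2 : ℝ≥0∞) * ((B k).2 : ℝ≥0∞)
            + ((B l).2 : ℝ≥0∞) * ((B l).2 : ℝ≥0∞)) := by
        rw [← add_assoc, h]
        ring
      have h3 := (ENNReal.add_left_inj hs2ne).mp h2
      simp only [hpow2]
      exact h3
    have hQ'fin : (∑' n, ((B' (n + 1)).2 : ℝ≥0∞) ^ (2 : ℝ)) ≠ ⊤ := by
      rw [hsq2]
      exact ENNReal.add_ne_top.mpr ⟨hQfin, hprodne⟩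
    have hQlt : (∑' n, ((B (n + 1)).2 : ℝ≥0∞) ^ (2 : ℝ))
        < (∑' n, ((B' (n + 1)).2 : ℝ≥0∞) ^ (2 : ℝ)) := by
      rw [hsq2]
      apply ENNReal.lt_add_right hQfin
      have hkpos : (B k).2 ≠ 0 := by
        have := hk'.2
        rw [hskrdef] at this
        simp only [rad] at this
        exact_mod_cast ne_of_gt this
      have hlpos : (B l).2 ≠ 0 := by
        have := hl'.2
        rw [hslrdef] at this
        simp only [rad] at this
        exact_mod_cast ne_of_gt this
      exact mul_ne_zero (by norm_num)
        (mul_ne_zero (ENNReal.coe_ne_zero.mpr hkpos) (ENNReal.coe_ne_zero.mpr hlpos))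
    refine ⟨B', hB'St, ?_, ?_⟩
    · rw [delta1_eq B' hB'fin, delta1_eq B hBfin', hr0, hrhoeq]
    · rw [delta2_eq B hQfin, delta2_eq B' hQ'fin, EReal.coe_lt_coe_iff, hB'0]
      have h2 := (ENNReal.toReal_lt_toReal hQfin hQ'fin).mpr hQlt
      linarith

/-- Lemma 4.7(a): safe replacement for two intersecting closed disks. -/
theorem stmt7 (A : ASC) (hN : memN A) (hrf : RedundancyFree A) (hd : 0 < delta1 A)
    (B : ASC) (hB : B ∈ Stilde A) (k l : ℕ) (hk : k ∈ SIdx B) (hl : l ∈ SIdx B)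
    (hkl : k ≠ l)
    (hmeet : (closedBall (ctr B k) (rad B k) ∩ closedBall (ctr B l) (rad B l)).Nonempty) :
    ((ball (ctr B k) (rad B k) ∩ ball (ctr B l) (rad B l)).Nonempty →
      ∃ B' ∈ Stilde A, delta1 B < delta1 B') ∧
    (ball (ctr B k) (rad B k) ∩ ball (ctr B l) (rad B l) = ∅ →
      ∃ B' ∈ Stilde A, delta1 B' = delta1 B ∧ delta2 B' < delta2 B) := by
  rcases lt_or_gt_of_ne hkl with h | h
  · exact merge_core A B hB k l hk hl h hmeet
  · have hcore := merge_core A B hB l k hl hk h (by rwa [Set.inter_comm] at hmeet)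
    constructor
    · intro hne
      exact hcore.1 (by rwa [Set.inter_comm] at hne)
    · intro hemp
      exact hcore.2 (by rwa [Set.inter_comm] at hemp)


end
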